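/- For any two skew-symmetric real n×n matrices X and Y, the Frobenius norm of the commutator satisfies ‖XY - YX‖_F ≤ ‖X‖_F ‖Y‖_F. -/

import Mathlib

noncomputable def frobNorm {n : ℕ} (M : Matrix (Fin n) (Fin n) ℝ) : ℝ :=
  Real.sqrt (∑ i, ∑ j, (M i j) ^ 2)

namespace CommSkewAux
open Matrix Complex Finset

variable {n : ℕ}


lemma four_distinct_sum (d : Fin n → ℝ) {i1 i2 i3 i4 : Fin n}
    (h12 : i1 ≠ i2) (h13 : i1 ≠ i3) (h14 : i1 ≠ i4) (h23 : i2 ≠ i3) (h24 : i2 ≠ i4)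
    (h34 : i3 ≠ i4) :
    d i1^2 + d i2^2 + d i3^2 + d i4^2 ≤ ∑ m, d m ^ 2 := by
  have h : ({i1, i2, i3, i4} : Finset (Fin n)).sum (fun m => d m ^ 2) ≤ ∑ m, d m ^2 :=
    Finset.sum_le_sum_of_subset_of_nonneg (Finset.subset_univ _) (fun i _ _ => sq_nonneg _)
  rwa [Finset.sum_insert (by simp [h12, h13, h14]), Finset.sum_insert (by simp [h23, h24]),
    Finset.sum_insert (by simp [h34]), Finset.sum_singleton, ← add_assoc, ← add_assoc] at h

lemma sq_le_sum (d : Fin n → ℝ) (i : Fin n) : d i ^ 2 ≤ ∑ m, d m ^ 2 :=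
  Finset.single_le_sum (fun m _ => sq_nonneg (d m)) (Finset.mem_univ i)

lemma key_sum (d : Fin n → ℝ) (c : Matrix (Fin n) (Fin n) ℂ)
    (hherm : ∀ j k, c k j = (starRingEnd ℂ) (c j k))
    (hex : ∀ j, d j ≠ 0 → ∃ m, d m = - d j)
    (huniq : ∀ j k, d j ≠ 0 → d k = - d j → (∀ m, d m = d j → m = j) → c j k = 0) :
    ∑ j, ∑ k, (d j - d k)^2 * Complex.normSq (c j k) ≤
      (∑ m, d m ^ 2) * (∑ j, ∑ k, Complex.normSq (c j k)) := by
  rw [Finset.mul_sum]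
  apply Finset.sum_le_sum; intro j _
  rw [Finset.mul_sum]
  apply Finset.sum_le_sum; intro k _
  by_cases hc : c j k = 0
  · simp [hc]
  have hsumnn : (0:ℝ) ≤ ∑ m, d m ^ 2 := Finset.sum_nonneg (fun m _ => sq_nonneg _)
  have hb : (d j - d k)^2 ≤ ∑ m, d m ^2 := by
    by_cases heq : d j = d k
    · simpa [heq] using hsumnn
    by_cases hskew : d k = - d j
    · have hdj : d j ≠ 0 := by
        intro h; exact heq (by rw [h, hskew, h, neg_zero])
      have hdk : d k ≠ 0 := by rw [hskew]; simpa using hdj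
      have hj' : ¬ (∀ m, d m = d j → m = j) := fun h => hc (huniq j k hdj hskew h)
      have hk' : ¬ (∀ m, d m = d k → m = k) := by
        intro h
        apply hc
        have h0 : c k j = 0 := huniq k j hdk (by rw [hskew]; ring) h
        have := hherm j k
        rw [h0] at this
        exact (star_eq_zero.mp this.symm)
      push_neg at hj' hk'
      obtain ⟨j', hj'1, hj'2⟩ := hj'
      obtain ⟨k', hk'1, hk'2⟩ := hk'
      have hvjk : d j ≠ d k := heq
      have h4 := four_distinct_sum d (i1 := j) (i2 := j') (i3 := k) (i4 := k')
        (fun h => hj'2 (h ▸ rfl)) (fun h => hvjk (h ▸ rfl))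
        (fun h => hvjk (by rw [h, hk'1]))
        (fun h => hvjk (by rw [← hj'1, h]))
        (fun h => hvjk (by rw [← hj'1, h, hk'1]))
        (fun h => hk'2 (h ▸ rfl))
      rw [hj'1, hk'1] at h4
      nlinarith [h4]
    · -- generic case
      by_cases hj0 : d j = 0
      · rw [hj0, zero_sub, neg_sq]; exact sq_le_sum d k
      by_cases hk0 : d k = 0
      · rw [hk0, sub_zero]; exact sq_le_sum d j
      obtain ⟨j', hj'⟩ := hex j hj0
      obtain ⟨k', hk'⟩ := hex k hk0
      have h4 := four_distinct_sum d (i1 := j) (i2 := j') (i3 := k) (i4 := k')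
        (fun h => hj0 (by rw [← h] at hj'; linarith))
        (fun h => heq (h ▸ rfl))
        (fun h => hskew (by rw [← h] at hk'; linarith))
        (fun h => hskew (by rw [h] at hj'; exact hj'))
        (fun h => heq (by rw [h, hk'] at hj'; linarith))
        (fun h => hk0 (by rw [← h] at hk'; linarith))
      rw [hj', hk'] at h4
      nlinarith [sq_nonneg (d j + d k)]
  exact mul_le_mul_of_nonneg_right hb (Complex.normSq_nonneg _)


noncomputable def gsum (M : Matrix (Fin n) (Fin n) ℂ) : ℝ := ∑ i, ∑ j, Complex.normSq (M i j)

lemma gsum_eq_trace (M : Matrix (Fin n) (Fin n) ℂ) : (gsum M : ℂ) = Matrix.trace (Mᴴ * M) := by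
  simp [gsum, Matrix.trace, Matrix.diag, Matrix.mul_apply, conjTranspose_apply,
    Complex.normSq_eq_conj_mul_self]
  rw [Finset.sum_comm]

lemma gsum_conj (U M : Matrix (Fin n) (Fin n) ℂ) (h1 : Uᴴ * U = 1) (h2 : U * Uᴴ = 1) :
    gsum (Uᴴ * M * U) = gsum M := by
  have h : ((gsum (Uᴴ * M * U) : ℝ) : ℂ) = ((gsum M : ℝ) : ℂ) := by
    rw [gsum_eq_trace, gsum_eq_trace]
    have : (Uᴴ * M * U)ᴴ * (Uᴴ * M * U) = Uᴴ * (Mᴴ * M) * U := by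
      simp only [conjTranspose_mul, conjTranspose_conjTranspose, mul_assoc]
      rw [← mul_assoc U Uᴴ, h2, one_mul]
    rw [this, Matrix.trace_mul_cycle]
    rw [h2, one_mul]
  exact_mod_cast h

lemma complex_key (A B : Matrix (Fin n) (Fin n) ℂ) (hA : A.IsHermitian) (hB : B.IsHermitian)
    (hAc : A.map (starRingEnd ℂ) = -A) (hBc : B.map (starRingEnd ℂ) = -B)
    (key : ∀ (d : Fin n → ℝ) (c : Matrix (Fin n) (Fin n) ℂ),
      (∀ j k, c k j = (starRingEnd ℂ) (c j k)) →
      (∀ j, d j ≠ 0 → ∃ m, d m = - d j) →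
      (∀ j k, d j ≠ 0 → d k = - d j → (∀ m, d m = d j → m = j) → c j k = 0) →
      ∑ j, ∑ k, (d j - d k)^2 * Complex.normSq (c j k) ≤
        (∑ m, d m ^ 2) * (∑ j, ∑ k, Complex.normSq (c j k))) :
    gsum (A * B - B * A) ≤ gsum A * gsum B := by
  classical
  set U : Matrix (Fin n) (Fin n) ℂ := (hA.eigenvectorUnitary : Matrix (Fin n) (Fin n) ℂ) with hUdef
  set d : Fin n → ℝ := hA.eigenvalues with hddef
  set D : Matrix (Fin n) (Fin n) ℂ := Matrix.diagonal (fun i => (d i : ℂ)) with hDdef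
  have hU1 : Uᴴ * U = 1 := by
    have := Matrix.mem_unitaryGroup_iff'.mp hA.eigenvectorUnitary.2
    rwa [Matrix.star_eq_conjTranspose] at this
  have hU2 : U * Uᴴ = 1 := by
    have := Matrix.mem_unitaryGroup_iff.mp hA.eigenvectorUnitary.2
    rwa [Matrix.star_eq_conjTranspose] at this
  have hspec : A = U * D * Uᴴ := by
    have := hA.spectral_theorem
    rw [Unitary.conjStarAlgAut_apply, Matrix.star_eq_conjTranspose] at this
    exact this
  have hAU : A * U = U * D := by
    rw [hspec, mul_assoc, mul_assoc, hU1, mul_one]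
  have hUA : Uᴴ * A = D * Uᴴ := by
    rw [hspec, ← mul_assoc, ← mul_assoc, hU1, one_mul]
  set c : Matrix (Fin n) (Fin n) ℂ := Uᴴ * B * U with hcdef
  -- conjugated matrix and T
  set Ub : Matrix (Fin n) (Fin n) ℂ := U.map (starRingEnd ℂ) with hUbdef
  set T : Matrix (Fin n) (Fin n) ℂ := Uᴴ * Ub with hTdef
  have hDmap : D.map (starRingEnd ℂ) = D := by
    ext i j
    by_cases h : i = j <;> simp [hDdef, Matrix.diagonal_apply, Matrix.map_apply, h]
  have hAUb : A * Ub = - (Ub * D) := by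
    have h1 : (A * U).map (starRingEnd ℂ) = (U * D).map (starRingEnd ℂ) := by rw [hAU]
    rw [Matrix.map_mul, Matrix.map_mul, hAc, hDmap, neg_mul] at h1
    rw [← hUbdef] at h1
    linear_combination (norm := module) -h1
  have hUbH : Ubᴴ = Uᵀ := by
    ext i j; simp [hUbdef, conjTranspose_apply, Matrix.map_apply]
  have hUbU : Uᵀ * Ub = 1 := by
    have h1 : (Uᴴ * U).map (starRingEnd ℂ) = (1 : Matrix (Fin n) (Fin n) ℂ).map (starRingEnd ℂ) := by
      rw [hU1]
    rw [Matrix.map_mul] at h1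
    have h2 : Uᴴ.map (starRingEnd ℂ) = Uᵀ := by
      ext i j; simp [conjTranspose_apply, Matrix.map_apply]
    have h3 : (1 : Matrix (Fin n) (Fin n) ℂ).map (starRingEnd ℂ) = 1 := by
      ext i j; by_cases h : i = j <;> simp [Matrix.one_apply, h]
    rwa [h2, h3, ← hUbdef] at h1
  have hUbU2 : Ub * Uᵀ = 1 := by
    have h1 : (U * Uᴴ).map (starRingEnd ℂ) = (1 : Matrix (Fin n) (Fin n) ℂ).map (starRingEnd ℂ) := by
      rw [hU2]
    rw [Matrix.map_mul] at h1
    have h2 : Uᴴ.map (starRingEnd ℂ) = Uᵀ := by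
      ext i j; simp [conjTranspose_apply, Matrix.map_apply]
    have h3 : (1 : Matrix (Fin n) (Fin n) ℂ).map (starRingEnd ℂ) = 1 := by
      ext i j; by_cases h : i = j <;> simp [Matrix.one_apply, h]
    rwa [h2, h3, ← hUbdef] at h1
  have hTT : T * Tᴴ = 1 := by
    rw [hTdef, conjTranspose_mul, conjTranspose_conjTranspose, hUbH]
    calc Uᴴ * Ub * (Uᵀ * U) = Uᴴ * (Ub * Uᵀ) * U := by simp only [mul_assoc]
      _ = 1 := by rw [hUbU2, mul_one, hU1]
  have hTT' : Tᴴ * T = 1 := by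
    rw [hTdef, conjTranspose_mul, conjTranspose_conjTranspose, hUbH]
    calc Uᵀ * U * (Uᴴ * Ub) = Uᵀ * (U * Uᴴ) * Ub := by simp only [mul_assoc]
      _ = 1 := by rw [hU2, mul_one, hUbU]
  have hUbT : Ub = U * T := by
    rw [hTdef, ← mul_assoc, hU2, one_mul]
  -- support of T
  have hTsupp : ∀ j m, T j m ≠ 0 → d j = - d m := by
    intro j m hne
    have h1 : D * T = - (T * D) := by
      have : Uᴴ * (A * Ub) = Uᴴ * (-(Ub * D)) := by rw [hAUb]
      rw [← mul_assoc, hUA, mul_assoc, ← hTdef] at this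
      rw [this, hTdef, mul_neg, mul_assoc]
    have h2 : (d j : ℂ) * T j m = -(T j m * (d m : ℂ)) := by
      have h2' := Matrix.ext_iff.mpr h1 j m
      simpa [hDdef, Matrix.diagonal_mul, Matrix.mul_diagonal] using h2'
    have h3 : ((d j : ℂ) + d m) * T j m = 0 := by linear_combination h2
    rcases mul_eq_zero.mp h3 with h | h
    · have : (d j : ℂ) = -(d m : ℂ) := by linear_combination h
      exact_mod_cast this
    · exact absurd h hne
  -- existence of antipodal eigenvalues
  have hex : ∀ j, d j ≠ 0 → ∃ m, d m = - d j := by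
    intro j hj
    by_contra hno
    push_neg at hno
    have hrow : ∀ m, T j m = 0 := by
      intro m
      by_contra hne
      exact hno m (by have := hTsupp j m hne; linarith)
    have h1 : (T * Tᴴ) j j = 1 := by rw [hTT]; simp [Matrix.one_apply]
    rw [Matrix.mul_apply] at h1
    simp only [conjTranspose_apply, hrow, zero_mul, Finset.sum_const_zero] at h1
    exact zero_ne_one h1
  -- hermitian-ness of c
  have hcH : cᴴ = c := by
    rw [hcdef]
    calc (Uᴴ * B * U)ᴴ = Uᴴ * (Bᴴ * (Uᴴ)ᴴ) := by
          simp only [conjTranspose_mul, conjTranspose_conjTranspose, mul_assoc]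
      _ = Uᴴ * B * U := by rw [hB.eq, conjTranspose_conjTranspose, mul_assoc]
  have hherm : ∀ j k, c k j = (starRingEnd ℂ) (c j k) := by
    intro j k
    conv_lhs => rw [← hcH]
    simp [conjTranspose_apply]
  -- entrywise conjugate of B
  have hBij : ∀ i l, (starRingEnd ℂ) (B i l) = - B i l := by
    intro i l
    have := Matrix.ext_iff.mpr hBc i l
    simpa [Matrix.map_apply] using this
  -- the uniqueness vanishing
  have huniq : ∀ j k, d j ≠ 0 → d k = - d j → (∀ m, d m = d j → m = j) → c j k = 0 := by
    intro j k hdj hdk huni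
    have hcol : ∀ m, m ≠ j → T m k = 0 := by
      intro m hm
      by_contra hne
      apply hm
      apply huni
      have h1 := hTsupp m k hne
      rw [hdk] at h1; linarith
    set α : ℂ := T j k with hαdef
    have hα1 : (starRingEnd ℂ) α * α = 1 := by
      have h1 : (Tᴴ * T) k k = 1 := by rw [hTT']; simp [Matrix.one_apply]
      rw [Matrix.mul_apply, Finset.sum_eq_single j] at h1
      · simpa [conjTranspose_apply] using h1
      · intro m _ hm; simp [conjTranspose_apply, hcol m hm]
      · intro h; exact absurd (Finset.mem_univ j) h
    have hαne : (starRingEnd ℂ) α ≠ 0 := by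
      intro h; rw [h] at hα1; simp at hα1
    have hrel : ∀ i, (starRingEnd ℂ) (U i k) = U i j * α := by
      intro i
      have h1 : Ub i k = (U * T) i k := by rw [← hUbT]
      rw [Matrix.mul_apply, Finset.sum_eq_single j] at h1
      · simpa [hUbdef, Matrix.map_apply] using h1
      · intro m _ hm; rw [hcol m hm, mul_zero]
      · intro h; exact absurd (Finset.mem_univ j) h
    have hrel2 : ∀ i, (starRingEnd ℂ) (U i j) = U i k * α := by
      intro i
      have h1 : U i k = (starRingEnd ℂ) (U i j) * (starRingEnd ℂ) α := by
        have h2 := congrArg (starRingEnd ℂ) (hrel i)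
        simpa [_root_.map_mul] using h2
      linear_combination (-α) * h1 - (starRingEnd ℂ) (U i j) * hα1
    have hrel3 : ∀ i, U i j = (starRingEnd ℂ) (U i k) * (starRingEnd ℂ) α := by
      intro i
      have h2 := congrArg (starRingEnd ℂ) (hrel2 i)
      simpa [_root_.map_mul] using h2
    have he : c j k = ∑ l, (∑ i, (starRingEnd ℂ) (U i j) * B i l) * U l k := by
      rw [hcdef]
      simp only [Matrix.mul_apply, conjTranspose_apply, Complex.star_def]
    have hckj : c k j = ∑ l, (∑ i, (starRingEnd ℂ) (U i k) * B i l) * U l j := by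
      rw [hcdef]
      simp only [Matrix.mul_apply, conjTranspose_apply, Complex.star_def]
    set s : ℂ := ∑ l, (∑ i, (starRingEnd ℂ) (U i j) * B i l) * (starRingEnd ℂ) (U l j) with hsdef
    have claim1 : s = α * c j k := by
      rw [hsdef, he, Finset.mul_sum]
      apply Finset.sum_congr rfl
      intro l _
      rw [hrel2 l]
      ring
    have claim2 : (starRingEnd ℂ) s = -((starRingEnd ℂ) α) * c k j := by
      rw [hsdef, map_sum, hckj, neg_mul, Finset.mul_sum, ← Finset.sum_neg_distrib]
      apply Finset.sum_congr rfl
      intro l _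
      rw [_root_.map_mul, Complex.conj_conj]
      have hinner : (starRingEnd ℂ) (∑ i, (starRingEnd ℂ) (U i j) * B i l)
          = (-(starRingEnd ℂ) α) * ∑ i, (starRingEnd ℂ) (U i k) * B i l := by
        rw [map_sum, Finset.mul_sum]
        apply Finset.sum_congr rfl
        intro i _
        rw [_root_.map_mul, Complex.conj_conj, hBij i l, hrel3 i]
        ring
      rw [hinner]
      ring
    have hzero : (starRingEnd ℂ) (c j k) = 0 := by
      have h2 := congrArg (starRingEnd ℂ) claim1
      rw [_root_.map_mul] at h2
      rw [hherm j k] at claim2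
      have h3 : (2:ℂ) * ((starRingEnd ℂ) α * (starRingEnd ℂ) (c j k)) = 0 := by
        linear_combination h2.symm.trans claim2
      have h4 : (starRingEnd ℂ) α * (starRingEnd ℂ) (c j k) = 0 := by
        rcases mul_eq_zero.mp h3 with h | h
        · norm_num at h
        · exact h
      rcases mul_eq_zero.mp h4 with h | h
      · exact absurd h hαne
      · exact h
    have h5 := congrArg (starRingEnd ℂ) hzero
    simpa using h5
  -- the gsum computations
  have hXc : Uᴴ * (A * B - B * A) * U = D * c - c * D := by
    have h1 : Uᴴ * (A * B - B * A) * U = (Uᴴ * A) * (B * U) - (Uᴴ * B) * (A * U) := by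
      simp only [Matrix.mul_sub, Matrix.sub_mul, mul_assoc]
    rw [h1, hUA, hAU, hcdef]
    simp only [mul_assoc]
  have hg1 : gsum (A * B - B * A) = gsum (D * c - c * D) := by
    rw [← hXc, gsum_conj _ _ hU1 hU2]
  have hgA : gsum A = ∑ m, d m ^ 2 := by
    have h1 : Uᴴ * A * U = D := by
      rw [hUA, mul_assoc, hU1, mul_one]
    rw [← gsum_conj U A hU1 hU2, h1]
    rw [gsum, hDdef]
    apply Finset.sum_congr rfl
    intro i _
    rw [Finset.sum_eq_single i]
    · rw [Matrix.diagonal_apply_eq]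
      rw [Complex.normSq_ofReal]; ring
    · intro m _ hm; rw [Matrix.diagonal_apply_ne' _ hm, Complex.normSq_zero]
    · intro h; exact absurd (Finset.mem_univ i) h
  have hgB : gsum B = gsum c := by
    rw [hcdef, gsum_conj _ _ hU1 hU2]
  have hgD : gsum (D * c - c * D) = ∑ j, ∑ k, (d j - d k)^2 * Complex.normSq (c j k) := by
    rw [gsum]
    apply Finset.sum_congr rfl
    intro j _
    apply Finset.sum_congr rfl
    intro k _
    have h1 : (D * c - c * D) j k = ((d j - d k : ℝ) : ℂ) * c j k := by
      rw [Matrix.sub_apply, hDdef, Matrix.diagonal_mul, Matrix.mul_diagonal]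
      push_cast
      ring
    rw [h1, Complex.normSq_mul, Complex.normSq_ofReal]
    ring
  rw [hg1, hgD, hgA, hgB]
  exact key d c hherm hex huniq

lemma gsum_map (M : Matrix (Fin n) (Fin n) ℝ) :
    gsum (M.map (⇑Complex.ofRealHom)) = ∑ i, ∑ j, (M i j) ^ 2 := by
  unfold gsum
  apply Finset.sum_congr rfl; intro i _
  apply Finset.sum_congr rfl; intro j _
  simp [Matrix.map_apply, Complex.normSq_ofReal]
  ring

lemma gsum_neg (M : Matrix (Fin n) (Fin n) ℂ) : gsum (-M) = gsum M := by
  unfold gsum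
  simp

lemma gsum_smul_I (M : Matrix (Fin n) (Fin n) ℂ) : gsum (Complex.I • M) = gsum M := by
  unfold gsum
  apply Finset.sum_congr rfl; intro i _
  apply Finset.sum_congr rfl; intro j _
  simp [Complex.normSq_mul]

end CommSkewAux

open CommSkewAux Matrix in
/-- For skew-symmetric matrices, `‖XY - YX‖_F ≤ ‖X‖_F ‖Y‖_F`. -/
theorem commutator_skew_bound {n : ℕ} (X Y : Matrix (Fin n) (Fin n) ℝ)
    (hX : X.transpose = -X) (hY : Y.transpose = -Y) :
    frobNorm (X * Y - Y * X) ≤ frobNorm X * frobNorm Y := by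
  set X' : Matrix (Fin n) (Fin n) ℂ := X.map (⇑Complex.ofRealHom) with hX'
  set Y' : Matrix (Fin n) (Fin n) ℂ := Y.map (⇑Complex.ofRealHom) with hY'
  set A : Matrix (Fin n) (Fin n) ℂ := Complex.I • X' with hA'
  set B : Matrix (Fin n) (Fin n) ℂ := Complex.I • Y' with hB'
  have hXskew : ∀ i j, X j i = - X i j := fun i j => by
    have := Matrix.ext_iff.mpr hX i j
    simpa [Matrix.transpose_apply] using this
  have hYskew : ∀ i j, Y j i = - Y i j := fun i j => by
    have := Matrix.ext_iff.mpr hY i j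
    simpa [Matrix.transpose_apply] using this
  have hAH : A.IsHermitian := by
    ext i j
    simp only [hA', conjTranspose_apply, Matrix.smul_apply, hX', Matrix.map_apply, smul_eq_mul]
    rw [hXskew j i]
    simp [Complex.ext_iff]
  have hBH : B.IsHermitian := by
    ext i j
    simp only [hB', conjTranspose_apply, Matrix.smul_apply, hY', Matrix.map_apply, smul_eq_mul]
    rw [hYskew j i]
    simp [Complex.ext_iff]
  have hAc : A.map (starRingEnd ℂ) = -A := by
    ext i j
    simp [hA', hX', Matrix.map_apply, Complex.ext_iff]
  have hBc : B.map (starRingEnd ℂ) = -B := by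
    ext i j
    simp [hB', hY', Matrix.map_apply, Complex.ext_iff]
  have hmain : gsum (A * B - B * A) ≤ gsum A * gsum B :=
    complex_key A B hAH hBH hAc hBc (fun d c h1 h2 h3 => key_sum d c h1 h2 h3)
  have hcomm : A * B - B * A = -(X' * Y' - Y' * X') := by
    have hAB : A * B = -(X' * Y') := by
      rw [hA', hB', smul_mul_smul_comm, Complex.I_mul_I, neg_smul, one_smul]
    have hBA : B * A = -(Y' * X') := by
      rw [hA', hB', smul_mul_smul_comm, Complex.I_mul_I, neg_smul, one_smul]
    rw [hAB, hBA]
    abel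
  have hmap : (X * Y - Y * X).map (⇑Complex.ofRealHom) = X' * Y' - Y' * X' := by
    ext i j
    simp only [hX', hY', Matrix.map_apply, Matrix.sub_apply, Matrix.mul_apply,
      Complex.ofRealHom_eq_coe]
    push_cast
    ring
  have h1 : ∑ i, ∑ j, ((X * Y - Y * X) i j) ^ 2 ≤
      (∑ i, ∑ j, (X i j) ^ 2) * (∑ i, ∑ j, (Y i j) ^ 2) := by
    have e1 : ∑ i, ∑ j, ((X * Y - Y * X) i j) ^ 2 = gsum (A * B - B * A) := by
      rw [hcomm, gsum_neg, ← hmap, gsum_map]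
    have e2 : gsum A = ∑ i, ∑ j, (X i j) ^ 2 := by rw [hA', gsum_smul_I, hX', gsum_map]
    have e3 : gsum B = ∑ i, ∑ j, (Y i j) ^ 2 := by rw [hB', gsum_smul_I, hY', gsum_map]
    rw [e1, ← e2, ← e3]
    exact hmain
  unfold frobNorm
  exact (Real.sqrt_le_sqrt h1).trans_eq
    (Real.sqrt_mul (Finset.sum_nonneg (fun i _ => Finset.sum_nonneg (fun j _ => sq_nonneg _))) _)
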